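/- For every m ≥ 1, there are exactly two nondegenerate monotone maps σ: [k] × [l]^op → [1] with k + l = 2m − 2 and k, l ≥ 0: one with (k, l) = (m−1, m) given by σ(i,j) = 1 iff i ≥ j, and one with (k, l) = (m, m−1) given by σ(i,j) = 1 iff i > j. -/

import Mathlib

def Mono2 {k l : ℕ} (σ : Fin (k + 1) → Fin (l + 1) → Fin 2) : Prop :=
  ∀ i i' j j', i ≤ i' → j' ≤ j → σ i j ≤ σ i' j'

def Nondeg {k l : ℕ} (σ : Fin (k + 1) → Fin (l + 1) → Fin 2) : Prop :=
  (∀ i : Fin k, (fun j => σ i.castSucc j) ≠ (fun j => σ i.succ j)) ∧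
  (∀ j : Fin l, (fun i => σ i j.castSucc) ≠ (fun i => σ i j.succ))

namespace TwoNondeg

/-- number of ones in row `i` -/
def rowCount {k l : ℕ} (σ : Fin (k + 1) → Fin (l + 1) → Fin 2) (i : Fin (k + 1)) : ℕ :=
  (Finset.univ.filter (fun j => σ i j = 1)).card

lemma rowCount_le {k l : ℕ} (σ : Fin (k + 1) → Fin (l + 1) → Fin 2) (i : Fin (k + 1)) :
    rowCount σ i ≤ l + 1 := by
  have := Finset.card_filter_le (Finset.univ : Finset (Fin (l+1))) (fun j => σ i j = 1)
  simpa [rowCount] using this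

lemma row_char {k l : ℕ} {σ : Fin (k + 1) → Fin (l + 1) → Fin 2} (hm : Mono2 σ)
    (i : Fin (k + 1)) (j : Fin (l + 1)) : σ i j = 1 ↔ (j : ℕ) < rowCount σ i := by
  constructor
  · intro h
    have hsub : Finset.Iic j ⊆ Finset.univ.filter (fun j' => σ i j' = 1) := by
      intro j' hj'
      simp only [Finset.mem_Iic] at hj'
      simp only [Finset.mem_filter, Finset.mem_univ, true_and]
      have := hm i i j j' le_rfl hj'
      omega
    have := Finset.card_le_card hsub
    rw [Fin.card_Iic] at this
    simpa [rowCount] using this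
  · intro h
    by_contra hne
    have hsub : Finset.univ.filter (fun j' => σ i j' = 1) ⊆ Finset.Iio j := by
      intro j' hj'
      simp only [Finset.mem_filter, Finset.mem_univ, true_and] at hj'
      simp only [Finset.mem_Iio]
      by_contra hle
      push_neg at hle
      have := hm i i j' j le_rfl hle
      omega
    have := Finset.card_le_card hsub
    rw [Fin.card_Iio] at this
    simp only [rowCount] at h
    omega

lemma sm_step {n : ℕ} {c : Fin (n + 1) → ℕ} (h : StrictMono c) :
    ∀ (d : ℕ) (i j : Fin (n + 1)), (i : ℕ) + d = (j : ℕ) → c i + d ≤ c j := by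
  intro d
  induction d with
  | zero =>
    intro i j hij
    have : i = j := Fin.ext (by omega)
    subst this; simp
  | succ d ih =>
    intro i j hij
    have hj1 : (j : ℕ) - 1 < n + 1 := by omega
    have h1 := ih i ⟨(j : ℕ) - 1, hj1⟩ (by simp; omega)
    have h2 : c ⟨(j : ℕ) - 1, hj1⟩ < c j := h (by rw [Fin.lt_def]; show (j : ℕ) - 1 < (j : ℕ); omega)
    omega

end TwoNondeg

open TwoNondeg in
theorem two_nondegenerate_simplices_even (t : ℕ) :
    (∀ (k l : ℕ) (σ : Fin (k + 1) → Fin (l + 1) → Fin 2),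
      k + l + 1 = 2 * (t + 1) → Mono2 σ → Nondeg σ →
        ((k = t ∧ l = t + 1 ∧ ∀ i j, σ i j = if (j : ℕ) ≤ (i : ℕ) then 1 else 0) ∨
         (k = t + 1 ∧ l = t ∧ ∀ i j, σ i j = if (j : ℕ) < (i : ℕ) then 1 else 0))) ∧
    (Mono2 (fun (i : Fin (t + 1)) (j : Fin (t + 2)) =>
        if (j : ℕ) ≤ (i : ℕ) then (1 : Fin 2) else 0) ∧
     Nondeg (fun (i : Fin (t + 1)) (j : Fin (t + 2)) =>
        if (j : ℕ) ≤ (i : ℕ) then (1 : Fin 2) else 0)) ∧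
    (Mono2 (fun (i : Fin (t + 2)) (j : Fin (t + 1)) =>
        if (j : ℕ) < (i : ℕ) then (1 : Fin 2) else 0) ∧
     Nondeg (fun (i : Fin (t + 2)) (j : Fin (t + 1)) =>
        if (j : ℕ) < (i : ℕ) then (1 : Fin 2) else 0)) := by
  refine ⟨?_, ⟨?_, ?_, ?_⟩, ?_, ?_, ?_⟩
  · -- uniqueness part
    intro k l σ hkl hm hnd
    obtain ⟨hrows, hcols⟩ := hnd
    -- c is monotone
    have hmono : Monotone (rowCount σ) := by
      intro i i' hii
      apply Finset.card_le_card
      intro j hj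
      simp only [Finset.mem_filter, Finset.mem_univ, true_and] at hj ⊢
      have := hm i i' j j hii le_rfl
      omega
    -- c is strictly monotone
    have hsm : StrictMono (rowCount σ) := by
      rw [Fin.strictMono_iff_lt_succ]
      intro i
      have hne := hrows i
      have : ∃ j, σ i.castSucc j ≠ σ i.succ j := by
        by_contra hco
        push_neg at hco
        exact hne (funext hco)
      obtain ⟨j, hj⟩ := this
      have hle := hm i.castSucc i.succ j j (le_of_lt (Fin.castSucc_lt_succ (i := i))) le_rfl
      have h0 : σ i.castSucc j = 0 := by omega
      have h1 : σ i.succ j = 1 := by omega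
      have ha := (row_char hm i.succ j).mp h1
      have hb : ¬ ((j : ℕ) < rowCount σ i.castSucc) := fun hcon =>
        by have := (row_char hm i.castSucc j).mpr hcon; omega
      omega
    -- every value 1..l is attained
    have hsurj : ∀ j : Fin l, ∃ i, rowCount σ i = (j : ℕ) + 1 := by
      intro j
      have hne := hcols j
      have : ∃ i, σ i j.castSucc ≠ σ i j.succ := by
        by_contra hco
        push_neg at hco
        exact hne (funext hco)
      obtain ⟨i, hj⟩ := this
      have hle := hm i i j.succ j.castSucc le_rfl (le_of_lt (Fin.castSucc_lt_succ (i := j)))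
      have h1 : σ i j.castSucc = 1 := by omega
      have h0 : σ i j.succ = 0 := by omega
      have ha := (row_char hm i j.castSucc).mp h1
      have hb : ¬ ((j.succ : ℕ) < rowCount σ i) := fun hcon =>
        by have := (row_char hm i j.succ).mpr hcon; omega
      simp only [Fin.coe_castSucc] at ha
      simp only [Fin.val_succ] at hb
      exact ⟨i, by omega⟩
    -- cardinality bookkeeping
    have hcardR : (Finset.image (rowCount σ) Finset.univ).card = k + 1 := by
      rw [Finset.card_image_of_injective _ hsm.injective, Finset.card_univ, Fintype.card_fin]
    have hsub1 : Finset.image (rowCount σ) Finset.univ ⊆ Finset.Iic (l + 1) := by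
      intro x hx
      simp only [Finset.mem_image, Finset.mem_univ, true_and] at hx
      obtain ⟨i, rfl⟩ := hx
      simpa [Finset.mem_Iic] using rowCount_le σ i
    have hsub2 : Finset.Icc 1 l ⊆ Finset.image (rowCount σ) Finset.univ := by
      intro x hx
      simp only [Finset.mem_Icc] at hx
      obtain ⟨i, hi⟩ := hsurj ⟨x - 1, by omega⟩
      simp only [Finset.mem_image, Finset.mem_univ, true_and]
      exact ⟨i, by simp at hi; omega⟩
    have hub : k + 1 ≤ l + 2 := by
      have := Finset.card_le_card hsub1
      rw [hcardR, Nat.card_Iic] at this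
      omega
    have hlb : l ≤ k + 1 := by
      have := Finset.card_le_card hsub2
      rw [hcardR, Nat.card_Icc] at this
      omega
    have hcases : (k = t ∧ l = t + 1) ∨ (k = t + 1 ∧ l = t) := by omega
    -- endpoints of c
    have hlast : ∀ i : Fin (k + 1), rowCount σ i + (k - (i : ℕ)) ≤ rowCount σ (Fin.last k) :=
      fun i => sm_step hsm (k - (i : ℕ)) i (Fin.last k) (by simp [Fin.last]; omega)
    have hfirst : ∀ i : Fin (k + 1), rowCount σ 0 + (i : ℕ) ≤ rowCount σ i :=
      fun i => sm_step hsm (i : ℕ) 0 i (by simp)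
    rcases hcases with ⟨hk, hl⟩ | ⟨hk, hl⟩
    · left
      refine ⟨hk, hl, ?_⟩
      -- here k + 1 = l, range = Icc 1 l
      have hkl1 : k + 1 = l := by omega
      have hR : Finset.Icc 1 l = Finset.image (rowCount σ) Finset.univ := by
        apply Finset.eq_of_subset_of_card_le hsub2
        rw [hcardR, Nat.card_Icc]; omega
      have hmem : ∀ i : Fin (k + 1), 1 ≤ rowCount σ i ∧ rowCount σ i ≤ l := by
        intro i
        have : rowCount σ i ∈ Finset.Icc 1 l := by
          rw [hR]; exact Finset.mem_image_of_mem (rowCount σ) (Finset.mem_univ i)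
        simpa [Finset.mem_Icc] using this
      have hval : ∀ i : Fin (k + 1), rowCount σ i = (i : ℕ) + 1 := by
        intro i
        have h1 := hfirst i
        have h2 := hlast i
        have h3 := (hmem 0).1
        have h4 := (hmem (Fin.last k)).2
        have h5 : (i : ℕ) ≤ k := by omega
        omega
      intro i j
      by_cases hji : (j : ℕ) ≤ (i : ℕ)
      · rw [if_pos hji]
        exact (row_char hm i j).mpr (by rw [hval]; omega)
      · rw [if_neg hji]
        have : ¬ σ i j = 1 := fun h => by
          have := (row_char hm i j).mp h; rw [hval] at this; omega
        omega
    · right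
      refine ⟨hk, hl, ?_⟩
      -- here k = l + 1, range = Iic (l+1)
      have hR : Finset.image (rowCount σ) Finset.univ = Finset.Iic (l + 1) := by
        apply Finset.eq_of_subset_of_card_le hsub1
        rw [hcardR, Nat.card_Iic]; omega
      have h0mem : (0 : ℕ) ∈ Finset.image (rowCount σ) Finset.univ := by
        rw [hR]; simp
      have hlmem : (l + 1) ∈ Finset.image (rowCount σ) Finset.univ := by
        rw [hR]; simp
      simp only [Finset.mem_image, Finset.mem_univ, true_and] at h0mem hlmem
      obtain ⟨i0, hi0⟩ := h0mem
      obtain ⟨i1, hi1⟩ := hlmem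
      have hc0 : rowCount σ 0 = 0 := by
        have := hmono (Fin.zero_le i0)
        omega
      have hclast : rowCount σ (Fin.last k) = l + 1 := by
        have h1 := hmono (Fin.le_last i1)
        have h2 := rowCount_le σ (Fin.last k)
        omega
      have hval : ∀ i : Fin (k + 1), rowCount σ i = (i : ℕ) := by
        intro i
        have h1 := hfirst i
        have h2 := hlast i
        have h5 : (i : ℕ) ≤ k := by omega
        omega
      intro i j
      by_cases hji : (j : ℕ) < (i : ℕ)
      · rw [if_pos hji]
        exact (row_char hm i j).mpr (by rw [hval]; omega)
      · rw [if_neg hji]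
        have : ¬ σ i j = 1 := fun h => by
          have := (row_char hm i j).mp h; rw [hval] at this; omega
        omega
  · -- Mono2 of first map
    intro i i' j j' hii hjj
    simp only
    have h1 : (i : ℕ) ≤ (i' : ℕ) := hii
    have h2 : (j' : ℕ) ≤ (j : ℕ) := hjj
    split_ifs with ha hb
    · exact le_rfl
    · omega
    · omega
    · exact le_rfl
  · -- Nondeg rows of first map
    intro i h
    have := congrFun h ⟨(i : ℕ) + 1, by omega⟩
    simp only [Fin.coe_castSucc, Fin.val_succ] at this
    rw [if_neg (by omega), if_pos (by omega)] at this
    exact absurd this (by decide)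
  · -- Nondeg cols of first map
    intro j h
    have := congrFun h ⟨(j : ℕ), by omega⟩
    simp only [Fin.coe_castSucc, Fin.val_succ] at this
    rw [if_pos (by omega), if_neg (by omega)] at this
    exact absurd this (by decide)
  · -- Mono2 of second map
    intro i i' j j' hii hjj
    simp only
    have h1 : (i : ℕ) ≤ (i' : ℕ) := hii
    have h2 : (j' : ℕ) ≤ (j : ℕ) := hjj
    split_ifs with ha hb
    · exact le_rfl
    · omega
    · omega
    · exact le_rfl
  · -- Nondeg rows of second map
    intro i h
    have := congrFun h ⟨(i : ℕ), by omega⟩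
    simp only [Fin.coe_castSucc, Fin.val_succ] at this
    rw [if_neg (by omega), if_pos (by omega)] at this
    exact absurd this (by decide)
  · -- Nondeg cols of second map
    intro j h
    have := congrFun h ⟨(j : ℕ) + 1, by omega⟩
    simp only [Fin.coe_castSucc, Fin.val_succ] at this
    rw [if_pos (by omega), if_neg (by omega)] at this
    exact absurd this (by decide)
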